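/- Let C be a nonempty closed convex subset of a real Hilbert space H, let ε > 0, let β > 0, let ψ : ℝ → ℝ be even, convex, and differentiable with a β-Lipschitzian derivative, and set h = ψ ∘ max(d_C − ε, 0). Then h : H → ℝ is convex and Fréchet differentiable with a β-Lipschitzian gradient, and for every x ∈ H the gradient of h at x equals (ψ'(d_C(x) − ε)/d_C(x)) (x − proj_C x) if d_C(x) > ε, and equals 0 if d_C(x) ≤ ε. -/

import Mathlib

open Metric Set InnerProductSpace

lemma quad_isLittleO {H : Type*} [NormedAddCommGroup H]
    {f : H → ℝ} {x : H} {K : ℝ}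
    (hf : ∀ y, |f y| ≤ K * ‖y - x‖ ^ 2) :
    (fun y => f y) =o[nhds x] fun y => y - x := by
  rw [Asymptotics.isLittleO_iff]
  intro c hc
  have hK' : (0:ℝ) < max K 1 := lt_of_lt_of_le zero_lt_one (le_max_right _ _)
  filter_upwards [Metric.ball_mem_nhds x (div_pos hc hK')] with y hy
  rw [Metric.mem_ball, dist_eq_norm] at hy
  have h1 : |f y| ≤ max K 1 * ‖y - x‖ ^ 2 := by
    refine (hf y).trans ?_
    have := sq_nonneg ‖y - x‖
    nlinarith [le_max_left K 1]
  have h2 : (0:ℝ) ≤ ‖y - x‖ := norm_nonneg _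
  have h3 : max K 1 * ‖y - x‖ ≤ c := by
    rcases eq_or_lt_of_le h2 with h | h
    · rw [← h]; simp; positivity
    · rw [lt_div_iff₀ hK'] at hy
      nlinarith [hy]
  calc ‖f y‖ = |f y| := rfl
    _ ≤ max K 1 * ‖y - x‖ ^ 2 := h1
    _ = (max K 1 * ‖y - x‖) * ‖y - x‖ := by ring
    _ ≤ c * ‖y - x‖ := by nlinarith
    _ = c * ‖y - x‖ := rfl

lemma taylor_ub {ψ ψ' : ℝ → ℝ} {β : ℝ}
    (hderiv : ∀ t, HasDerivAt ψ (ψ' t) t)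
    (hL : ∀ a b, |ψ' a - ψ' b| ≤ β * |a - b|) (a b : ℝ) :
    ψ b ≤ ψ a + ψ' a * (b - a) + β / 2 * (b - a) ^ 2 := by
  set s := b - a with hs
  set F : ℝ → ℝ := fun t => ψ (a + t * s) - ψ a - t * (ψ' a * s) - β / 2 * t ^ 2 * s ^ 2 with hF_def
  have hF : ∀ t, HasDerivAt F (ψ' (a + t * s) * s - ψ' a * s - β * t * s ^ 2) t := by
    intro t
    have h1 : HasDerivAt (fun t : ℝ => a + t * s) s t := by
      simpa using ((hasDerivAt_id t).mul_const s).const_add a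
    have h2 : HasDerivAt (fun t : ℝ => ψ (a + t * s)) (ψ' (a + t * s) * s) t :=
      (hderiv (a + t * s)).comp t h1
    have h3 : HasDerivAt (fun t : ℝ => t * (ψ' a * s)) (ψ' a * s) t := by
      simpa using (hasDerivAt_id t).mul_const (ψ' a * s)
    have h4 : HasDerivAt (fun t : ℝ => β / 2 * t ^ 2 * s ^ 2) (β * t * s ^ 2) t := by
      have := ((hasDerivAt_pow 2 t).const_mul (β / 2)).mul_const (s ^ 2)
      refine this.congr_deriv ?_
      rw [show (2:ℕ) - 1 = 1 from rfl, pow_one]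
      push_cast
      ring
    have := ((h2.sub_const (ψ a)).sub h3).sub h4
    exact this
  have hanti : AntitoneOn F (Icc 0 1) := by
    refine antitoneOn_of_deriv_nonpos (convex_Icc 0 1) ?_ ?_ ?_
    · exact fun t _ => ((hF t).continuousAt).continuousWithinAt
    · exact fun t _ => ((hF t).differentiableAt).differentiableWithinAt
    · intro t ht
      rw [interior_Icc, mem_Ioo] at ht
      rw [(hF t).deriv]
      have h5 := hL (a + t * s) a
      have h6 : |a + t * s - a| = t * |s| := by
        rw [show a + t * s - a = t * s by ring, abs_mul, abs_of_pos ht.1]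
      rw [h6] at h5
      have h7 : (ψ' (a + t * s) - ψ' a) * s ≤ β * t * s ^ 2 := by
        calc (ψ' (a + t * s) - ψ' a) * s ≤ |(ψ' (a + t * s) - ψ' a) * s| := le_abs_self _
          _ = |ψ' (a + t * s) - ψ' a| * |s| := abs_mul _ _
          _ ≤ β * (t * |s|) * |s| := by
              apply mul_le_mul_of_nonneg_right h5 (abs_nonneg _)
          _ = β * t * (|s| * |s|) := by ring
          _ = β * t * s ^ 2 := by rw [← abs_mul, ← sq, abs_of_nonneg (sq_nonneg s)]
      linarith
  have h01 : F 1 ≤ F 0 := hanti (by norm_num) (by norm_num) zero_le_one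
  have hF0 : F 0 = 0 := by simp [hF_def]
  have hF1 : F 1 = ψ b - ψ a - ψ' a * s - β / 2 * s ^ 2 := by
    simp only [hF_def, one_mul, one_pow]
    rw [show a + s = b by rw [hs]; ring]
    ring
  rw [hF0, hF1] at h01
  nlinarith [h01]

lemma arith1 {β dX dY a r c px py ε : ℝ} (hβ : 0 < β) (hε : 0 < ε)
    (hx : ε < dX)
    (ha : dX + a ≤ dY) (h2 : dY ^ 2 ≤ dX ^ 2 + 2 * dX * a + r ^ 2)
    (hcle : c ≤ β * (dX - ε)) (hc0 : 0 ≤ c)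
    (hkey : py ≤ px + c * ((dY - ε) - (dX - ε)) + β / 2 * ((dY - ε) - (dX - ε)) ^ 2) :
    py ≤ px + c * a + β / 2 * r ^ 2 := by
  have e1 : c * (dY - dX - a) ≤ β * dX * (dY - dX - a) :=
    mul_le_mul_of_nonneg_right (by nlinarith) (by linarith)
  have e2 : 2 * dX * (dY - dX - a) ≤ r ^ 2 - (dY - dX) ^ 2 := by nlinarith
  have e3 : β / 2 * (2 * dX * (dY - dX - a)) ≤ β / 2 * (r ^ 2 - (dY - dX) ^ 2) :=
    mul_le_mul_of_nonneg_left e2 (by positivity)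
  nlinarith [e1, e3]

lemma arith2 {β dX a r c px p0 ε : ℝ} (hβ : 0 < β) (hx : ε < dX)
    (hsa : a ≤ ε - dX) (ha2 : a ^ 2 ≤ r ^ 2)
    (hcle : c ≤ β * (dX - ε)) (hc0 : 0 ≤ c)
    (hkey : p0 ≤ px + c * (0 - (dX - ε)) + β / 2 * (0 - (dX - ε)) ^ 2) :
    p0 ≤ px + c * a + β / 2 * r ^ 2 := by
  have e1 : c * (-(dX - ε) - a) ≤ β * (dX - ε) * (-(dX - ε) - a) :=
    mul_le_mul_of_nonneg_right hcle (by linarith)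
  nlinarith [e1, sq_nonneg ((dX - ε) + a), mul_nonneg hβ.le (sq_nonneg ((dX - ε) + a)),
    mul_le_mul_of_nonneg_left ha2 hβ.le]

theorem stmt_5 {H : Type*} [NormedAddCommGroup H] [InnerProductSpace ℝ H] [CompleteSpace H]
    (C : Set H) (hCne : C.Nonempty) (hCclosed : IsClosed C) (hCconv : Convex ℝ C)
    (ε : ℝ) (hε : 0 < ε) (β : ℝ) (hβ : 0 < β)
    (ψ : ℝ → ℝ) (heven : ∀ t, ψ (-t) = ψ t) (hconv : ConvexOn ℝ Set.univ ψ)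
    (ψ' : ℝ → ℝ) (hderiv : ∀ t, HasDerivAt ψ (ψ' t) t)
    (hlip : LipschitzWith (Real.toNNReal β) ψ')
    (h : H → ℝ) (hdef : ∀ x, h x = ψ (max (Metric.infDist x C - ε) 0))
    (projC : H → H)
    (hproj : ∀ x, projC x ∈ C ∧ ∀ y ∈ C, dist x (projC x) ≤ dist x y) :
    ConvexOn ℝ Set.univ h ∧
    (∀ x, DifferentiableAt ℝ h x) ∧
    LipschitzWith (Real.toNNReal β) (fun x => gradient h x) ∧
    (∀ x : H,
      (ε < Metric.infDist x C → HasGradientAt h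
        ((ψ' (Metric.infDist x C - ε) / Metric.infDist x C) • (x - projC x)) x) ∧
      (Metric.infDist x C ≤ ε → HasGradientAt h 0 x)) := by
  classical
  set d : H → ℝ := fun x => Metric.infDist x C with hd_def
  -- ψ' facts
  have hβ' : ∀ a b, |ψ' a - ψ' b| ≤ β * |a - b| := by
    intro a b
    have := hlip.dist_le_mul a b
    rwa [Real.dist_eq, Real.dist_eq, Real.coe_toNNReal β hβ.le] at this
  have hψ'0 : ψ' 0 = 0 := by
    have hneg : HasDerivAt (fun t : ℝ => ψ (-t)) (ψ' (-(0:ℝ)) * (-1)) 0 :=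
      (hderiv (-(0:ℝ))).comp (0:ℝ) (hasDerivAt_neg (0:ℝ))
    rw [funext heven] at hneg
    have := hneg.unique (hderiv 0)
    rw [neg_zero] at this
    linarith
  have hψ'mono : Monotone ψ' := by
    have := hconv.monotoneOn_deriv (fun x _ => (hderiv x).differentiableAt)
    rw [funext fun t => (hderiv t).deriv] at this
    exact monotoneOn_univ.mp this
  have hψ'nonneg : ∀ t : ℝ, 0 ≤ t → 0 ≤ ψ' t := fun t ht => hψ'0 ▸ hψ'mono ht
  have hψ'le : ∀ t : ℝ, 0 ≤ t → ψ' t ≤ β * t := by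
    intro t ht
    have := hβ' t 0
    rw [hψ'0, sub_zero, sub_zero, abs_of_nonneg ht] at this
    exact le_trans (le_abs_self _) this
  have hsub1 : ∀ a b : ℝ, ψ a + ψ' a * (b - a) ≤ ψ b := by
    intro a b
    rcases lt_trichotomy a b with hab | rfl | hab
    · have := hconv.le_slope_of_hasDerivAt (mem_univ a) (mem_univ b) hab (hderiv a)
      rw [slope_def_field, le_div_iff₀ (by linarith)] at this
      nlinarith [this]
    · simp
    · have := hconv.slope_le_of_hasDerivAt (mem_univ b) (mem_univ a) hab (hderiv a)
      rw [slope_def_field, div_le_iff₀ (by linarith)] at this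
      nlinarith [this]
  have htay : ∀ a b : ℝ, ψ b ≤ ψ a + ψ' a * (b - a) + β / 2 * (b - a) ^ 2 :=
    taylor_ub hderiv hβ'
  have hψmin : ∀ t : ℝ, ψ 0 ≤ ψ t := by
    intro t
    have := hsub1 0 t
    rw [hψ'0] at this
    linarith
  have hψquad : ∀ t : ℝ, ψ t ≤ ψ 0 + β / 2 * t ^ 2 := by
    intro t
    have := htay 0 t
    rw [hψ'0] at this
    simpa using this
  -- projection facts
  have hPmem : ∀ x, projC x ∈ C := fun x => (hproj x).1
  haveI : Nonempty C := hCne.to_subtype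
  have hdP : ∀ x, d x = ‖x - projC x‖ := by
    intro x
    refine le_antisymm ?_ ?_
    · rw [← dist_eq_norm]
      exact Metric.infDist_le_dist_of_mem (hPmem x)
    · rw [hd_def]
      simp only
      rw [Metric.infDist_eq_iInf, ← dist_eq_norm]
      exact le_ciInf fun w => (hproj x).2 w w.2
  have hdnonneg : ∀ x, 0 ≤ d x := fun x => Metric.infDist_nonneg
  have hip : ∀ x, ∀ z ∈ C, (⟪x - projC x, z - projC x⟫_ℝ) ≤ 0 := by
    intro x
    have hiInf : ‖x - projC x‖ = ⨅ w : C, ‖x - w‖ := by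
      refine le_antisymm (le_ciInf fun w => ?_) ?_
      · rw [← dist_eq_norm, ← dist_eq_norm]
        exact (hproj x).2 w w.2
      · have hbdd : BddBelow (Set.range fun w : C => ‖x - (w : H)‖) := by
          refine ⟨0, ?_⟩
          rintro y ⟨w, rfl⟩
          exact norm_nonneg _
        exact ciInf_le hbdd ⟨projC x, hPmem x⟩
    exact (norm_eq_iInf_iff_real_inner_le_zero hCconv (hPmem x)).mp hiInf
  have hdlip : ∀ x y : H, |d y - d x| ≤ ‖y - x‖ := by
    intro x y
    have := (Metric.lipschitz_infDist_pt C).dist_le_mul y x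
    rwa [Real.dist_eq, dist_eq_norm, NNReal.coe_one, one_mul] at this
  have hnormu : ∀ x, 0 < d x → ‖(d x)⁻¹ • (x - projC x)‖ = 1 := by
    intro x hdx
    rw [norm_smul, Real.norm_eq_abs, abs_of_pos (inv_pos.mpr hdx), ← hdP x]
    field_simp
  have hsubd : ∀ x y : H, 0 < d x →
      d x + (⟪(d x)⁻¹ • (x - projC x), y - x⟫_ℝ) ≤ d y := by
    intro x y hdx
    have hdecomp : y - x = (y - projC y) + ((projC y - projC x) + (projC x - x)) := by abel
    rw [hdecomp, inner_add_right, inner_add_right]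
    have h1 : (⟪(d x)⁻¹ • (x - projC x), y - projC y⟫_ℝ) ≤ d y := by
      have hcs := real_inner_le_norm ((d x)⁻¹ • (x - projC x)) (y - projC y)
      rwa [hnormu x hdx, one_mul, ← hdP y] at hcs
    have h2 : (⟪(d x)⁻¹ • (x - projC x), projC y - projC x⟫_ℝ) ≤ 0 := by
      rw [real_inner_smul_left]
      have hz := hip x (projC y) (hPmem y)
      have hinv : (0:ℝ) ≤ (d x)⁻¹ := inv_nonneg.mpr (hdnonneg x)
      exact mul_nonpos_of_nonneg_of_nonpos hinv hz
    have h3 : (⟪(d x)⁻¹ • (x - projC x), projC x - x⟫_ℝ) = -d x := by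
      rw [real_inner_smul_left]
      have hin : (⟪x - projC x, projC x - x⟫_ℝ) = -(‖x - projC x‖ ^ 2) := by
        rw [show projC x - x = -(x - projC x) by abel, inner_neg_right,
          real_inner_self_eq_norm_sq]
      rw [hin, ← hdP x]
      field_simp
    linarith
  have hquadd : ∀ x y : H, 0 < d x →
      d y ^ 2 ≤ d x ^ 2 + 2 * d x * (⟪(d x)⁻¹ • (x - projC x), y - x⟫_ℝ) + ‖y - x‖ ^ 2 := by
    intro x y hdx
    have hle : d y ≤ ‖y - projC x‖ := by
      rw [← dist_eq_norm]
      exact Metric.infDist_le_dist_of_mem (hPmem x)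
    have hinner : (⟪x - projC x, y - x⟫_ℝ) =
        d x * (⟪(d x)⁻¹ • (x - projC x), y - x⟫_ℝ) := by
      rw [real_inner_smul_left]
      field_simp
    have hexp : ‖y - projC x‖ ^ 2 =
        d x ^ 2 + 2 * d x * (⟪(d x)⁻¹ • (x - projC x), y - x⟫_ℝ) + ‖y - x‖ ^ 2 := by
      rw [show y - projC x = (x - projC x) + (y - x) by abel,
        norm_add_sq_real (x - projC x) (y - x), ← hdP x, hinner]
      ring
    calc d y ^ 2 ≤ ‖y - projC x‖ ^ 2 := pow_le_pow_left₀ (hdnonneg y) hle 2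
      _ = _ := hexp
  -- gradient existence
  have hgrad_pos : ∀ x, ε < d x →
      HasGradientAt h ((ψ' (d x - ε) / d x) • (x - projC x)) x := by
    intro x hx
    have hdx : 0 < d x := lt_trans hε hx
    have hgd : HasGradientAt d ((d x)⁻¹ • (x - projC x)) x := by
      rw [hasGradientAt_iff_isLittleO]
      apply quad_isLittleO (K := 1 / (2 * d x))
      intro y
      have h1 := hsubd x y hdx
      have h2 := hquadd x y hdx
      rw [abs_le]
      constructor
      · have hpos : (0:ℝ) ≤ 1 / (2 * d x) * ‖y - x‖ ^ 2 := by positivity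
        linarith
      · rw [one_div, inv_mul_eq_div, le_div_iff₀ (by positivity)]
        nlinarith [sq_nonneg (d y - d x)]
    have hfd := hasGradientAt_iff_hasFDerivAt.mp hgd
    have hfd2 := hfd.sub_const ε
    have hcomp := (hderiv (d x - ε)).comp_hasFDerivAt x hfd2
    have hev : h =ᶠ[nhds x] fun y => ψ (d y - ε) := by
      have hopen : IsOpen {y : H | ε < d y} :=
        isOpen_lt continuous_const (Metric.continuous_infDist_pt C)
      filter_upwards [hopen.mem_nhds hx] with y hy
      rw [hdef y, max_eq_left (sub_nonneg.mpr (le_of_lt hy))]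
    have hfinal := hcomp.congr_of_eventuallyEq hev
    rw [div_eq_mul_inv, mul_smul, hasGradientAt_iff_hasFDerivAt, map_smul]
    exact hfinal
  have hgrad_le : ∀ x, d x ≤ ε → HasGradientAt h 0 x := by
    intro x hx
    have hx0 : max (d x - ε) 0 = 0 := max_eq_right (by linarith)
    rw [hasGradientAt_iff_isLittleO]
    apply quad_isLittleO (K := β / 2)
    intro y
    rw [inner_zero_left, sub_zero, hdef x, hx0, hdef y]
    have hgy0 : (0:ℝ) ≤ max (d y - ε) 0 := le_max_right _ _
    have hgyle : max (d y - ε) 0 ≤ ‖y - x‖ := by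
      refine max_le ?_ (norm_nonneg _)
      have h1 := hdlip x y
      have h2 := le_abs_self (d y - d x)
      linarith
    have hup := hψquad (max (d y - ε) 0)
    have hlo := hψmin (max (d y - ε) 0)
    have hsq : (max (d y - ε) 0) ^ 2 ≤ ‖y - x‖ ^ 2 := pow_le_pow_left₀ hgy0 hgyle 2
    rw [abs_le]
    constructor
    · have hpos : (0:ℝ) ≤ β / 2 * ‖y - x‖ ^ 2 := by positivity
      linarith
    · nlinarith
  set G : H → H := fun x =>
    if ε < d x then (ψ' (d x - ε) / d x) • (x - projC x) else 0 with hG_def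
  have hGgrad : ∀ x, HasGradientAt h (G x) x := by
    intro x
    by_cases hx : ε < d x
    · rw [hG_def]; simp only [if_pos hx]; exact hgrad_pos x hx
    · rw [hG_def]; simp only [if_neg hx]; exact hgrad_le x (not_lt.mp hx)
  -- subgradient inequality
  have hGpos : ∀ x, ε < d x → G x = (ψ' (d x - ε) / d x) • (x - projC x) := by
    intro x hx
    rw [hG_def]
    simp only [if_pos hx]
  have hGzero : ∀ x, d x ≤ ε → G x = 0 := by
    intro x hx
    rw [hG_def]
    simp only [if_neg (not_lt.mpr hx)]
  have hGinner : ∀ x y, ε < d x → (⟪G x, y - x⟫_ℝ) =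
      ψ' (d x - ε) * (⟪(d x)⁻¹ • (x - projC x), y - x⟫_ℝ) := by
    intro x y hx
    rw [hGpos x hx, real_inner_smul_left, real_inner_smul_left]
    ring
  have hlow : ∀ x y : H, h x + (⟪G x, y - x⟫_ℝ) ≤ h y := by
    intro x y
    by_cases hx : ε < d x
    · have hdx : 0 < d x := lt_trans hε hx
      rw [hdef x, hdef y, max_eq_left (by linarith : (0:ℝ) ≤ d x - ε), hGinner x y hx]
      have ha := hsubd x y hdx
      have hgy : max (d y - ε) 0 - (d x - ε) ≥ (⟪(d x)⁻¹ • (x - projC x), y - x⟫_ℝ) := by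
        have h1 : d y - ε ≤ max (d y - ε) 0 := le_max_left _ _
        linarith
      have hψ'nn : 0 ≤ ψ' (d x - ε) := hψ'nonneg _ (by linarith)
      have hkey := hsub1 (d x - ε) (max (d y - ε) 0)
      have hmul : ψ' (d x - ε) * (⟪(d x)⁻¹ • (x - projC x), y - x⟫_ℝ) ≤
          ψ' (d x - ε) * (max (d y - ε) 0 - (d x - ε)) :=
        mul_le_mul_of_nonneg_left hgy hψ'nn
      linarith
    · push_neg at hx
      rw [hGzero x hx, inner_zero_left, add_zero, hdef x, hdef y,
        max_eq_right (by linarith : d x - ε ≤ 0)]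
      exact hψmin _
  have habs2 : ∀ x y : H, 0 < d x →
      (⟪(d x)⁻¹ • (x - projC x), y - x⟫_ℝ) ^ 2 ≤ ‖y - x‖ ^ 2 := by
    intro x y hdx
    have h1 := abs_real_inner_le_norm ((d x)⁻¹ • (x - projC x)) (y - x)
    rw [hnormu x hdx, one_mul] at h1
    nlinarith [abs_nonneg (⟪(d x)⁻¹ • (x - projC x), y - x⟫_ℝ),
      sq_abs (⟪(d x)⁻¹ • (x - projC x), y - x⟫_ℝ)]
  -- descent lemma
  have hdesc : ∀ x y : H, h y ≤ h x + (⟪G x, y - x⟫_ℝ) + β / 2 * ‖y - x‖ ^ 2 := by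
    intro x y
    by_cases hx : ε < d x
    · have hdx : 0 < d x := lt_trans hε hx
      rw [hdef x, hdef y, max_eq_left (by linarith : (0:ℝ) ≤ d x - ε), hGinner x y hx]
      have ha := hsubd x y hdx
      have h2 := hquadd x y hdx
      have ha2 := habs2 x y hdx
      have hcle : ψ' (d x - ε) ≤ β * (d x - ε) := hψ'le _ (by linarith)
      have hc0 : 0 ≤ ψ' (d x - ε) := hψ'nonneg _ (by linarith)
      by_cases hy : ε < d y
      · rw [max_eq_left (by linarith : (0:ℝ) ≤ d y - ε)]
        exact arith1 hβ hε hx ha h2 hcle hc0 (htay (d x - ε) (d y - ε))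
      · push_neg at hy
        rw [max_eq_right (by linarith : d y - ε ≤ 0)]
        refine arith2 hβ hx ?_ ha2 hcle hc0 (htay (d x - ε) 0)
        linarith
    · push_neg at hx
      rw [hGzero x hx, inner_zero_left, add_zero, hdef x, hdef y,
        max_eq_right (by linarith : d x - ε ≤ 0)]
      have hgy0 : (0:ℝ) ≤ max (d y - ε) 0 := le_max_right _ _
      have hgyle : max (d y - ε) 0 ≤ ‖y - x‖ := by
        refine max_le ?_ (norm_nonneg _)
        have h1 := hdlip x y
        have h2 := le_abs_self (d y - d x)
        linarith
      have hup := hψquad (max (d y - ε) 0)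
      have hsq : (max (d y - ε) 0) ^ 2 ≤ ‖y - x‖ ^ 2 := pow_le_pow_left₀ hgy0 hgyle 2
      nlinarith
  -- cocoercivity
  have key : ∀ p q : H,
      h p + (⟪G p, q - p⟫_ℝ) + β⁻¹ / 2 * ‖G q - G p‖ ^ 2 ≤ h q := by
    intro p q
    have h1 := hlow p (q - β⁻¹ • (G q - G p))
    have h2 := hdesc q (q - β⁻¹ • (G q - G p))
    have e0 : q - β⁻¹ • (G q - G p) - q = -(β⁻¹ • (G q - G p)) := by abel
    have e1 : q - β⁻¹ • (G q - G p) - p = (q - p) - β⁻¹ • (G q - G p) := by abel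
    rw [e1, inner_sub_right, real_inner_smul_right] at h1
    rw [e0, inner_neg_right, real_inner_smul_right] at h2
    have e2 : β / 2 * ‖-(β⁻¹ • (G q - G p))‖ ^ 2 = β⁻¹ / 2 * ‖G q - G p‖ ^ 2 := by
      rw [norm_neg, norm_smul, Real.norm_eq_abs, abs_of_pos (inv_pos.mpr hβ)]
      field_simp
    rw [e2] at h2
    have e3 : β⁻¹ * (⟪G q, G q - G p⟫_ℝ) - β⁻¹ * (⟪G p, G q - G p⟫_ℝ) =
        β⁻¹ * ‖G q - G p‖ ^ 2 := by
      rw [← mul_sub, ← inner_sub_left, real_inner_self_eq_norm_sq]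
    have e4 : β⁻¹ / 2 * ‖G q - G p‖ ^ 2 * 2 = β⁻¹ * ‖G q - G p‖ ^ 2 := by ring
    linarith
  have hcoc : ∀ x y : H, ‖G y - G x‖ ^ 2 ≤ β * (⟪G y - G x, y - x⟫_ℝ) := by
    intro x y
    have k1 := key x y
    have k2 := key y x
    rw [norm_sub_rev (G x) (G y)] at k2
    have e6 : (⟪G x, y - x⟫_ℝ) + (⟪G y, x - y⟫_ℝ) = -(⟪G y - G x, y - x⟫_ℝ) := by
      rw [inner_sub_left, show x - y = -(y - x) by abel, inner_neg_right]
      ring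
    have hsum : β⁻¹ / 2 * ‖G y - G x‖ ^ 2 + β⁻¹ / 2 * ‖G y - G x‖ ^ 2 ≤
        (⟪G y - G x, y - x⟫_ℝ) := by linarith
    have e7 : β * (β⁻¹ / 2 * ‖G y - G x‖ ^ 2 + β⁻¹ / 2 * ‖G y - G x‖ ^ 2) =
        ‖G y - G x‖ ^ 2 := by
      field_simp
      ring
    calc ‖G y - G x‖ ^ 2 = _ := e7.symm
      _ ≤ β * (⟪G y - G x, y - x⟫_ℝ) := mul_le_mul_of_nonneg_left hsum hβ.le
  have hlipG : LipschitzWith (Real.toNNReal β) G := by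
    refine LipschitzWith.of_dist_le_mul fun x y => ?_
    rw [dist_eq_norm, dist_eq_norm, Real.coe_toNNReal β hβ.le]
    have hc := hcoc y x
    have hcs := real_inner_le_norm (G x - G y) (x - y)
    by_cases h0 : ‖G x - G y‖ = 0
    · rw [h0]
      positivity
    · have hpos : 0 < ‖G x - G y‖ := lt_of_le_of_ne (norm_nonneg _) (Ne.symm h0)
      have hfin : ‖G x - G y‖ ^ 2 ≤ β * (‖G x - G y‖ * ‖x - y‖) :=
        le_trans hc (mul_le_mul_of_nonneg_left hcs hβ.le)
      nlinarith [hpos, hfin]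
  have hconvh : ConvexOn ℝ Set.univ h := by
    refine ⟨convex_univ, fun x _ y _ p q hp hq hpq => ?_⟩
    simp only [smul_eq_mul]
    set z := p • x + q • y with hz_def
    have h1 := hlow z x
    have h2 := hlow z y
    set A := (⟪G z, x - z⟫_ℝ) with hA_def
    set B := (⟪G z, y - z⟫_ℝ) with hB_def
    have e1 : p * A + q * B = 0 := by
      rw [hA_def, hB_def, ← real_inner_smul_right, ← real_inner_smul_right,
        ← inner_add_right]
      have e : p • (x - z) + q • (y - z) = p • x + q • y - (p + q) • z := by
        rw [smul_sub, smul_sub, add_smul]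
        abel
      rw [e, hpq, one_smul, hz_def, sub_self, inner_zero_right]
    have h1' := mul_le_mul_of_nonneg_left h1 hp
    have h2' := mul_le_mul_of_nonneg_left h2 hq
    have e2 : p * h z + q * h z = h z := by
      rw [← add_mul, hpq, one_mul]
    linarith [h1', h2', e1, e2]
  have hgradeq : (fun x => gradient h x) = G := funext fun x => (hGgrad x).gradient
  refine ⟨hconvh, fun x => (hGgrad x).differentiableAt, by rw [hgradeq]; exact hlipG,
    fun x => ⟨fun hx => hgrad_pos x hx, fun hx => hgrad_le x hx⟩⟩
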